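/- For all integers n ≥ 3 and m ≥ 1, the quiver of tagged m-arcs Γ_⊙(n,m) with the map τ_m is a stable translation quiver, and it is isomorphic as a translation quiver to (Γ(D_n,m), τ̃): there is a bijection ρ from the tagged m-arcs to the vertex set of Γ(D_n,m) such that there is an m-move from an arc α to an arc β if and only if there is an arrow ρ(α) → ρ(β) in Γ(D_n,m), and ρ(τ_m(α)) = τ̃(ρ(α)) for all tagged m-arcs α. -/

import Mathlib

/-!
Common combinatorial definitions for the translation quivers of
Baur–Marsh, "A geometric description of the m-cluster categories of type Dₙ".

* `DLab` is the type of second coordinates of vertices of a type-`D` translation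
  quiver: `DLab.z false` is the label `0`, `DLab.z true` is the label `0̄`, and
  `DLab.pos j` is the (unbarred) label `j ≥ 1`.
* `DVertex N h` is the vertex set `ℤ/N × {0, 0̄, 1, …, h−2}`.
* `DArrow N h` is the arrow relation of the translation quiver with `N` columns
  and labels `0, 0̄, 1, …, h−2`.
* `DTau N c` is the translation: `(i,j) ↦ (i−1, j̄)` when `i = 0`, `j ∈ {0,0̄}` and
  `c` is odd, and `(i,j) ↦ (i−1,j)` otherwise.

With these conventions, `Γ(D_N, 1)` is `(DVertex N N, DArrow N N, DTau N N)`
and `Γ(D_n, m)` is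
`(DVertex (n*m−m+1) n, DArrow (n*m−m+1) n, DTau (n*m−m+1) (n*m))`.
-/

/-- Labels `0` (= `z false`), `0̄` (= `z true`) and `j ≥ 1` (= `pos j`). -/
inductive DLab : Type
  | z : Bool → DLab
  | pos : ℕ → DLab
deriving DecidableEq

/-- The bar operation on labels: swaps `0` and `0̄`, fixes all other labels. -/
def DLab.bar : DLab → DLab
  | .z b => .z (!b)
  | .pos j => .pos j

/-- The vertex set `ℤ/N × {0, 0̄, 1, …, h−2}`. -/
def DVertex (N h : ℕ) : Set (ZMod N × DLab) :=
  {v | ∀ j : ℕ, v.2 = DLab.pos j → 1 ≤ j ∧ j ≤ h - 2}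

/-- The arrows `(i,j) → (i,j−1)` and `(i,j−1) → (i+1,j)` for `1 ≤ j ≤ h−2`,
together with `(i,1) → (i,0̄)` and `(i,0̄) → (i+1,1)`. -/
inductive DArrow (N h : ℕ) : ZMod N × DLab → ZMod N × DLab → Prop
  | down (i : ZMod N) (j : ℕ) (h1 : 2 ≤ j) (h2 : j ≤ h - 2) :
      DArrow N h (i, DLab.pos j) (i, DLab.pos (j - 1))
  | toZ (i : ZMod N) (b : Bool) :
      DArrow N h (i, DLab.pos 1) (i, DLab.z b)
  | fromZ (i : ZMod N) (b : Bool) :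
      DArrow N h (i, DLab.z b) (i + 1, DLab.pos 1)
  | up (i : ZMod N) (j : ℕ) (h1 : 1 ≤ j) (h2 : j + 1 ≤ h - 2) :
      DArrow N h (i, DLab.pos j) (i + 1, DLab.pos (j + 1))

/-- The translation `τ(i,j) = (i−1, j̄)` if `i = 0`, `j ∈ {0,0̄}` and `c` is odd,
and `τ(i,j) = (i−1, j)` otherwise.  For `Γ(D_N,1)` one takes `c = N`; for
`Γ(D_n,m)` one takes `c = n*m` (and `N = n*m−m+1`). -/
def DTau (N c : ℕ) : ZMod N × DLab → ZMod N × DLab := fun v =>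
  match v with
  | (i, DLab.z b) =>
      if i = 0 ∧ c % 2 = 1 then (i - 1, DLab.z (!b)) else (i - 1, DLab.z b)
  | (i, DLab.pos j) => (i - 1, DLab.pos j)

/-- `p 0 → p 1 → ⋯ → p m` is a path in `Γ(D_N,1)`. -/
def IsPath (N m : ℕ) (p : ℕ → ZMod N × DLab) : Prop :=
  ∀ k, k < m → DArrow N N (p k) (p (k + 1))

/-- `p 0 → p 1 → ⋯ → p m` is a sectional path in `Γ(D_N,1)`:
`τ (p (k+1)) ≠ p (k−1)` for `1 ≤ k ≤ m − 1`. -/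
def IsSectional (N m : ℕ) (p : ℕ → ZMod N × DLab) : Prop :=
  IsPath N m p ∧ ∀ k, 1 ≤ k → k + 1 ≤ m → DTau N N (p (k + 1)) ≠ p (k - 1)

/-- The extra condition defining restricted paths: there is no `1 ≤ k ≤ m−1`
such that for some `r`, `p (k+1) = (r, 0)` and `p (k−1) = (r−1, 0̄)`, or
`p (k+1) = (r, 0̄)` and `p (k−1) = (r−1, 0)`. -/
def NoForbidden (N m : ℕ) (p : ℕ → ZMod N × DLab) : Prop :=
  ¬ ∃ k, 1 ≤ k ∧ k + 1 ≤ m ∧ ∃ r : ZMod N,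
      ((p (k + 1) = (r, DLab.z false) ∧ p (k - 1) = (r - 1, DLab.z true)) ∨
       (p (k + 1) = (r, DLab.z true) ∧ p (k - 1) = (r - 1, DLab.z false)))

/-- `p 0 → p 1 → ⋯ → p m` is a restricted sectional path in `Γ(D_N,1)`. -/
def IsRestricted (N m : ℕ) (p : ℕ → ZMod N × DLab) : Prop :=
  IsSectional N m p ∧ NoForbidden N m p

/-- There is a restricted sectional path of length `m` from `x` to `y` in
`Γ(D_N,1)`; these are exactly the arrows `x → y` of the restricted `m`-th power
`μ_m(Γ(D_N,1))`. -/
def RSPath (N m : ℕ) (x y : ZMod N × DLab) : Prop :=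
  ∃ p : ℕ → ZMod N × DLab, IsRestricted N m p ∧ p 0 = x ∧ p m = y

/-- The set `V = {(r,s) : s ∈ {0,0̄} or m ∣ s}` inside the vertex set of
`Γ(D_N,1)`. -/
def VSet (N m : ℕ) : Set (ZMod N × DLab) :=
  {v | v ∈ DVertex N N ∧ ∀ j : ℕ, v.2 = DLab.pos j → m ∣ j}

/-- The map `σ'` from the vertex set of `Γ(D_n,m)` to the vertex set of
`Γ(D_N,1)`, where `N = n*m−m+1`:  `σ'(i,j) = (i*m, j*m)` if `j ∉ {0,0̄}`, or if
`j ∈ {0,0̄}`, `m` is odd and `n` is even; otherwise, with `i.val` the standard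
representative of `i`, `σ'(i,j) = (i*m, j*m)` if `⌊i*m/N⌋` is even and
`σ'(i,j) = (i*m, (j̄)*m)` if `⌊i*m/N⌋` is odd (with the conventions
`0*m = 0` and `0̄*m = 0̄`). -/
def DSigma (n m : ℕ) : ZMod (n * m - m + 1) × DLab → ZMod (n * m - m + 1) × DLab :=
  fun v =>
    match v with
    | (i, DLab.pos j) => (i * (m : ZMod (n * m - m + 1)), DLab.pos (j * m))
    | (i, DLab.z b) =>
        if m % 2 = 1 ∧ n % 2 = 0 then
          (i * (m : ZMod (n * m - m + 1)), DLab.z b)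
        else if (i.val * m) / (n * m - m + 1) % 2 = 0 then
          (i * (m : ZMod (n * m - m + 1)), DLab.z b)
        else
          (i * (m : ZMod (n * m - m + 1)), DLab.z (!b))

/-- `C` is a connected component of the quiver with arrow relation `A`:
it is nonempty, closed under arrows in both directions, and any two of its
vertices are connected by an unoriented path. -/
def IsConnComponent {α : Type*} (A : α → α → Prop) (C : Set α) : Prop :=
  C.Nonempty ∧ (∀ x ∈ C, ∀ y, (A x y ∨ A y x) → y ∈ C) ∧
    ∀ x ∈ C, ∀ y ∈ C, Relation.ReflTransGen (fun a b => A a b ∨ A b a) x y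

/-- The set `X_k = {(i, j) : j ∈ {k, m+k, …, (n−2)m+k}}`. -/
def XSet (N n m k : ℕ) : Set (ZMod N × DLab) :=
  {v | ∃ (i : ZMod N) (l : ℕ), l ≤ n - 2 ∧ v = (i, DLab.pos (l * m + k))}

/-- Vertex set `ℤ/N × {1, …, h}` of the translation quiver `Γ(A_h, N)`
(the Auslander–Reiten quiver of `D^b(A_h)/τ^N`). -/
def AVertex (N h : ℕ) : Set (ZMod N × ℕ) :=
  {v | 1 ≤ v.2 ∧ v.2 ≤ h}

/-- Arrows of `Γ(A_h, N)`: `(i,j) → (i,j−1)` for `2 ≤ j ≤ h` and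
`(i,j) → (i+1,j+1)` for `1 ≤ j ≤ h−1`. -/
inductive AArrow (N h : ℕ) : ZMod N × ℕ → ZMod N × ℕ → Prop
  | down (i : ZMod N) (j : ℕ) (h1 : 2 ≤ j) (h2 : j ≤ h) :
      AArrow N h (i, j) (i, j - 1)
  | up (i : ZMod N) (j : ℕ) (h1 : 1 ≤ j) (h2 : j + 1 ≤ h) :
      AArrow N h (i, j) (i + 1, j + 1)

/-- Translation of `Γ(A_h, N)`: `(i,j) ↦ (i−1, j)`. -/
def ATau (N : ℕ) (v : ZMod N × ℕ) : ZMod N × ℕ := (v.1 - 1, v.2)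

/-- Tagged arcs in the punctured `N`-gon: `TArc.arc i k` is the arc
`D_{i, i+1+k*m}` (for `1 ≤ k ≤ n−2`), and `TArc.tag i b` is the tagged arc
`D_{ii}^+` (for `b = false`) or `D_{ii}^-` (for `b = true`). -/
inductive TArc (N : ℕ) : Type
  | arc : ZMod N → ℕ → TArc N
  | tag : ZMod N → Bool → TArc N

/-- The set of tagged `m`-arcs: arcs `D_{i,i+1+k*m}` with `1 ≤ k ≤ n−2`
together with all tagged arcs `D_{ii}^±`. -/
def TArcSet (N n : ℕ) : Set (TArc N) :=
  {a | ∀ (i : ZMod N) (k : ℕ), a = TArc.arc i k → 1 ≤ k ∧ k ≤ n - 2}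

/-- The `m`-moves between tagged `m`-arcs, i.e. the arrows of `Γ_⊙(n,m)`:
`D_{i,i+1+km} → D_{i,i+1+(k+1)m}` for `1 ≤ k ≤ n−3`;
`D_{i,i+1+km} → D_{i+m,i+1+km} = D_{i+m,(i+m)+1+(k−1)m}` for `2 ≤ k ≤ n−2`;
`D_{i,i+1+(n−2)m} → D_{ii}^±`; and
`D_{ii}^± → D_{i+m,i} = D_{i+m,(i+m)+1+(n−2)m}`. -/
inductive MMove (N n m : ℕ) : TArc N → TArc N → Prop
  | extend (i : ZMod N) (k : ℕ) (h1 : 1 ≤ k) (h2 : k ≤ n - 3) :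
      MMove N n m (TArc.arc i k) (TArc.arc i (k + 1))
  | rotate (i : ZMod N) (k : ℕ) (h1 : 2 ≤ k) (h2 : k ≤ n - 2) :
      MMove N n m (TArc.arc i k) (TArc.arc (i + (m : ZMod N)) (k - 1))
  | toTag (i : ZMod N) (b : Bool) :
      MMove N n m (TArc.arc i (n - 2)) (TArc.tag i b)
  | fromTag (i : ZMod N) (b : Bool) :
      MMove N n m (TArc.tag i b) (TArc.arc (i + (m : ZMod N)) (n - 2))

/-- The map `τ_m` on tagged `m`-arcs: `D_{i,i+1+km} ↦ D_{i−m,(i−m)+1+km}` and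
`D_{ii}^± ↦ D_{i−m,i−m}^±` if `m` is even, `D_{ii}^± ↦ D_{i−m,i−m}^∓` if `m`
is odd. -/
def TauArc (N m : ℕ) : TArc N → TArc N
  | .arc i k => .arc (i - (m : ZMod N)) k
  | .tag i b => .tag (i - (m : ZMod N)) (if m % 2 = 1 then !b else b)


/-- Auxiliary: characterization of the arrows of `Γ(D_N, h)`. -/
lemma darrow_iff' (N h : ℕ) (x y : ZMod N × DLab) :
    DArrow N h x y ↔
      ((∃ i j, 2 ≤ j ∧ j ≤ h - 2 ∧ x = (i, DLab.pos j) ∧ y = (i, DLab.pos (j - 1))) ∨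
       (∃ i b, x = (i, DLab.pos 1) ∧ y = (i, DLab.z b)) ∨
       (∃ i b, x = (i, DLab.z b) ∧ y = (i + 1, DLab.pos 1)) ∨
       (∃ i j, 1 ≤ j ∧ j + 1 ≤ h - 2 ∧ x = (i, DLab.pos j) ∧ y = (i + 1, DLab.pos (j + 1)))) := by
  constructor
  · intro hA
    cases hA with
    | down i j h1 h2 => exact Or.inl ⟨i, j, h1, h2, rfl, rfl⟩
    | toZ i b => exact Or.inr (Or.inl ⟨i, b, rfl, rfl⟩)
    | fromZ i b => exact Or.inr (Or.inr (Or.inl ⟨i, b, rfl, rfl⟩))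
    | up i j h1 h2 => exact Or.inr (Or.inr (Or.inr ⟨i, j, h1, h2, rfl, rfl⟩))
  · rintro (⟨i, j, h1, h2, rfl, rfl⟩ | ⟨i, b, rfl, rfl⟩ | ⟨i, b, rfl, rfl⟩ |
      ⟨i, j, h1, h2, rfl, rfl⟩)
    · exact DArrow.down i j h1 h2
    · exact DArrow.toZ i b
    · exact DArrow.fromZ i b
    · exact DArrow.up i j h1 h2

/-- Auxiliary: characterization of the `m`-moves. -/
lemma mmove_iff' (N n m : ℕ) (x y : TArc N) :
    MMove N n m x y ↔
      ((∃ i k, 1 ≤ k ∧ k ≤ n - 3 ∧ x = TArc.arc i k ∧ y = TArc.arc i (k + 1)) ∨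
       (∃ i k, 2 ≤ k ∧ k ≤ n - 2 ∧ x = TArc.arc i k ∧
          y = TArc.arc (i + (m : ZMod N)) (k - 1)) ∨
       (∃ i b, x = TArc.arc i (n - 2) ∧ y = TArc.tag i b) ∨
       (∃ i b, x = TArc.tag i b ∧ y = TArc.arc (i + (m : ZMod N)) (n - 2))) := by
  constructor
  · intro hA
    cases hA with
    | extend i k h1 h2 => exact Or.inl ⟨i, k, h1, h2, rfl, rfl⟩
    | rotate i k h1 h2 => exact Or.inr (Or.inl ⟨i, k, h1, h2, rfl, rfl⟩)
    | toTag i b => exact Or.inr (Or.inr (Or.inl ⟨i, b, rfl, rfl⟩))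
    | fromTag i b => exact Or.inr (Or.inr (Or.inr ⟨i, b, rfl, rfl⟩))
  · rintro (⟨i, k, h1, h2, rfl, rfl⟩ | ⟨i, k, h1, h2, rfl, rfl⟩ | ⟨i, b, rfl, rfl⟩ |
      ⟨i, b, rfl, rfl⟩)
    · exact MMove.extend i k h1 h2
    · exact MMove.rotate i k h1 h2
    · exact MMove.toTag i b
    · exact MMove.fromTag i b

/-- Auxiliary: the sign function used to define the isomorphism `ρ`. -/
def epsAux (N m : ℕ) : ZMod N → Bool :=
  fun j => if m % 2 = 1 then decide (j.val % 2 = 1) else false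

/-- Auxiliary: the isomorphism `ρ`, depending on a unit `u` and a sign
function `e`. -/
def rhoAux (N n : ℕ) (u : ZMod N) (e : ZMod N → Bool) : TArc N → ZMod N × DLab
  | .arc i k => (i * u, .pos (n - 1 - k))
  | .tag i b => (i * u, .z (xor b (e (i * u))))

/-- For `n ≥ 3`, `m ≥ 1` and `N = n*m−m+1`, the quiver
`Γ_⊙(n,m)` of tagged `m`-arcs of the punctured `N`-gon, with the map `τ_m`, is
a stable translation quiver, and it is isomorphic as a translation quiver to
`(Γ(D_n,m), τ̃)`: there is a bijection `ρ` from the tagged `m`-arcs to the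
vertex set of `Γ(D_n,m)` such that there is an `m`-move `α → β` iff there is an
arrow `ρ α → ρ β` in `Γ(D_n,m)`, and `ρ(τ_m α) = τ̃(ρ α)` for all tagged
`m`-arcs `α`. -/
theorem tagged_arc_quiver_is_translation_quiver_iso_gamma (n m N : ℕ)
    (hn : 3 ≤ n) (hm : 1 ≤ m) (hN : N = n * m - m + 1) :
    ((Set.BijOn (TauArc N m) (TArcSet N n) (TArcSet N n)) ∧
      ∀ x ∈ TArcSet N n, ∀ y ∈ TArcSet N n,
        (MMove N n m y x ↔ MMove N n m (TauArc N m x) y)) ∧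
    ∃ ρ : TArc N → ZMod N × DLab,
      Set.BijOn ρ (TArcSet N n) (DVertex N n) ∧
      (∀ x ∈ TArcSet N n, ∀ y ∈ TArcSet N n,
        (MMove N n m x y ↔ DArrow N n (ρ x) (ρ y))) ∧
      ∀ x ∈ TArcSet N n, ρ (TauArc N m x) = DTau N (n * m) (ρ x) := by
  have hmN : m ≤ n * m := Nat.le_mul_of_pos_left m (by omega)
  have hN' : N = (n - 1) * m + 1 := by rw [hN, Nat.sub_one_mul]
  have hN3 : 3 ≤ N := by
    have h2m : 2 * m ≤ (n - 1) * m := Nat.mul_le_mul_right m (by omega)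
    omega
  haveI : NeZero N := ⟨by omega⟩
  constructor
  · -- Part 1: stable translation quiver
    constructor
    · -- `TauArc` is a bijection on the set of tagged arcs
      refine ⟨?_, ?_, ?_⟩
      · rintro (⟨i, k⟩ | ⟨i, b⟩) ha i' k' h
        · simp only [TauArc] at h
          cases h
          exact ha i k rfl
        · simp only [TauArc] at h
          exact (by cases h)
      · rintro (⟨i, k⟩ | ⟨i, b⟩) ha (⟨i', k'⟩ | ⟨i', b'⟩) hb h <;> simp only [TauArc] at h
        · obtain ⟨h1, h2⟩ := TArc.arc.inj h
          have hi : i = i' := by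
            have := congrArg (fun z => z + (m : ZMod N)) h1
            simpa using this
          rw [hi, h2]
        · exact (by cases h)
        · exact (by cases h)
        · obtain ⟨h1, h2⟩ := TArc.tag.inj h
          have hi : i = i' := by
            have := congrArg (fun z => z + (m : ZMod N)) h1
            simpa using this
          have hb2 : b = b' := by
            by_cases hm2 : m % 2 = 1 <;> simp [hm2] at h2 <;> exact h2
          rw [hi, hb2]
      · rintro (⟨i, k⟩ | ⟨i, b⟩) ha
        · refine ⟨TArc.arc (i + (m : ZMod N)) k, fun i' k' h => ?_, ?_⟩
          · cases h
            exact ha i k rfl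
          · simp [TauArc, add_sub_cancel_right]
        · refine ⟨TArc.tag (i + (m : ZMod N)) (if m % 2 = 1 then !b else b),
            fun i' k' h => (by cases h), ?_⟩
          · by_cases hm2 : m % 2 = 1 <;> simp [TauArc, hm2, add_sub_cancel_right]
    · -- stability condition
      intro x hx y hy
      constructor
      · intro h
        cases h with
        | extend i k h1 h2 =>
            simpa [TauArc, sub_add_cancel] using
              MMove.rotate (N := N) (n := n) (m := m) (i - (m : ZMod N)) (k + 1)
                (by omega) (by omega)
        | rotate i k h1 h2 =>
            have hk : k - 1 + 1 = k := by omega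
            simpa [TauArc, add_sub_cancel_right, hk] using
              MMove.extend (N := N) (n := n) (m := m) i (k - 1) (by omega) (by omega)
        | toTag i b =>
            simpa [TauArc, sub_add_cancel] using
              MMove.fromTag (N := N) (n := n) (m := m) (i - (m : ZMod N))
                (if m % 2 = 1 then !b else b)
        | fromTag i b =>
            simpa [TauArc, add_sub_cancel_right] using
              MMove.toTag (N := N) (n := n) (m := m) i b
      · rcases x with ⟨i, k⟩ | ⟨i, b⟩ <;> intro h <;> simp only [TauArc] at h <;>
          rw [mmove_iff'] at h
        · rcases h with ⟨i0, k0, h1, h2, hxe, rfl⟩ | ⟨i0, k0, h1, h2, hxe, rfl⟩ |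
            ⟨i0, b0, hxe, rfl⟩ | ⟨i0, b0, hxe, hy'⟩
          · cases hxe
            simpa [sub_add_cancel] using
              MMove.rotate (N := N) (n := n) (m := m) (i - (m : ZMod N)) (k + 1)
                (by omega) (by omega)
          · cases hxe
            have hk : k - 1 + 1 = k := by omega
            simpa [sub_add_cancel, hk] using
              MMove.extend (N := N) (n := n) (m := m) i (k - 1) (by omega) (by omega)
          · cases hxe
            simpa [sub_add_cancel] using
              MMove.fromTag (N := N) (n := n) (m := m) (i - (m : ZMod N)) b0
          · exact (by cases hxe)
        · rcases h with ⟨i0, k0, h1, h2, hxe, rfl⟩ | ⟨i0, k0, h1, h2, hxe, rfl⟩ |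
            ⟨i0, b0, hxe, rfl⟩ | ⟨i0, b0, hxe, rfl⟩
          · exact (by cases hxe)
          · exact (by cases hxe)
          · exact (by cases hxe)
          · cases hxe
            simpa [sub_add_cancel] using
              MMove.toTag (N := N) (n := n) (m := m) i b
  · -- Part 2: the isomorphism
    have hco : Nat.Coprime m N := by
      have h1 : Nat.Coprime m (1 + (n - 1) * m) :=
        (Nat.coprime_add_mul_right_right m 1 (n - 1)).2 (Nat.coprime_one_right m)
      have h2 : N = 1 + (n - 1) * m := by omega
      rwa [h2]
    obtain ⟨u, hmu⟩ : ∃ u : ZMod N, (m : ZMod N) * u = 1 :=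
      ⟨((ZMod.unitOfCoprime m hco)⁻¹ : (ZMod N)ˣ), by
        rw [← ZMod.coe_unitOfCoprime m hco]
        exact (ZMod.unitOfCoprime m hco).mul_inv⟩
    have hum : u * (m : ZMod N) = 1 := by rw [mul_comm]; exact hmu
    have hinj : ∀ a b : ZMod N, a * u = b * u → a = b := by
      intro a b hab
      have := congrArg (fun z => z * (m : ZMod N)) hab
      simpa [mul_assoc, hum] using this
    have hinj2 : ∀ a b : ZMod N, a * u = b * u + 1 → a = b + (m : ZMod N) := by
      intro a b hab
      have := congrArg (fun z => z * (m : ZMod N)) hab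
      simpa [mul_assoc, hum, add_mul] using this
    have hadd : ∀ a : ZMod N, (a + (m : ZMod N)) * u = a * u + 1 := by
      intro a; rw [add_mul, hmu]
    have hsub : ∀ a : ZMod N, (a - (m : ZMod N)) * u = a * u - 1 := by
      intro a; rw [sub_mul, hmu]
    have hmul : ∀ a : ZMod N, a * (m : ZMod N) * u = a := by
      intro a; rw [mul_assoc, hmu, mul_one]
    refine ⟨rhoAux N n u (epsAux N m), ⟨?_, ?_, ?_⟩, ?_, ?_⟩
    · -- MapsTo
      rintro (⟨i, k⟩ | ⟨i, b⟩) ha j hj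
      · simp only [rhoAux] at hj
        cases hj
        obtain ⟨hk1, hk2⟩ := ha i k rfl
        omega
      · simp only [rhoAux] at hj
        exact DLab.noConfusion hj
    · -- InjOn
      rintro (⟨i, k⟩ | ⟨i, b⟩) ha (⟨i', k'⟩ | ⟨i', b'⟩) hb hr <;> simp only [rhoAux] at hr
      · injection hr with h1 h2
        injection h2 with h3
        obtain ⟨hk1, hk2⟩ := ha i k rfl
        obtain ⟨hk1', hk2'⟩ := hb i' k' rfl
        have hk : k = k' := by omega
        rw [hinj i i' h1, hk]
      · injection hr with h1 h2
        exact DLab.noConfusion h2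
      · injection hr with h1 h2
        exact DLab.noConfusion h2
      · injection hr with h1 h2
        injection h2 with h3
        have hi : i = i' := hinj i i' h1
        rw [hi] at h3
        have hb2 : b = b' := by
          cases hxe : epsAux N m (i' * u) <;> rw [hxe] at h3 <;> simpa using h3
        rw [hi, hb2]
    · -- SurjOn
      rintro ⟨j, bz | l⟩ hv
      · refine ⟨TArc.tag (j * (m : ZMod N)) (xor bz (epsAux N m j)),
          fun i' k' h => (by cases h), ?_⟩
        simp only [rhoAux, hmul]
        rw [Bool.xor_assoc, Bool.xor_self, Bool.xor_false]
      · obtain ⟨hl1, hl2⟩ := hv l rfl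
        refine ⟨TArc.arc (j * (m : ZMod N)) (n - 1 - l), fun i' k' h => ?_, ?_⟩
        · cases h
          constructor <;> omega
        · have hll : n - 1 - (n - 1 - l) = l := by omega
          simp only [rhoAux, hmul, hll]
    · -- arrows correspond
      rintro (⟨i, k⟩ | ⟨i, b⟩) hx (⟨i', k'⟩ | ⟨i', b'⟩) hy
      · -- arc / arc
        obtain ⟨hk1, hk2⟩ := hx i k rfl
        obtain ⟨hk1', hk2'⟩ := hy i' k' rfl
        constructor
        · intro h
          rw [mmove_iff'] at h
          rcases h with ⟨i0, k0, h1, h2, hxe, hye⟩ | ⟨i0, k0, h1, h2, hxe, hye⟩ |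
            ⟨i0, b0, hxe, hye⟩ | ⟨i0, b0, hxe, hye⟩
          · cases hxe; cases hye
            have h3 : n - 1 - k - 1 = n - 1 - (k + 1) := by omega
            simpa [rhoAux, h3] using
              DArrow.down (N := N) (h := n) (i * u) (n - 1 - k) (by omega) (by omega)
          · cases hxe; cases hye
            have h3 : n - 1 - k + 1 = n - 1 - (k - 1) := by omega
            simpa [rhoAux, h3, hadd] using
              DArrow.up (N := N) (h := n) (i * u) (n - 1 - k) (by omega) (by omega)
          · exact (by cases hye)
          · exact (by cases hxe)
        · intro h
          simp only [rhoAux] at h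
          rw [darrow_iff'] at h
          rcases h with ⟨i0, j0, h1, h2, hxe, hye⟩ | ⟨i0, b0, hxe, hye⟩ |
            ⟨i0, b0, hxe, hye⟩ | ⟨i0, j0, h1, h2, hxe, hye⟩
          · injection hxe with hxe1 hxe2
            injection hye with hye1 hye2
            injection hxe2 with hxj
            injection hye2 with hyj
            have hi : i' = i := hinj i' i (hye1.trans hxe1.symm)
            have hk : k' = k + 1 := by omega
            rw [hi, hk]
            exact MMove.extend i k (by omega) (by omega)
          · injection hye with hye1 hye2
            exact DLab.noConfusion hye2
          · injection hxe with hxe1 hxe2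
            exact DLab.noConfusion hxe2
          · injection hxe with hxe1 hxe2
            injection hye with hye1 hye2
            injection hxe2 with hxj
            injection hye2 with hyj
            have hi : i' = i + (m : ZMod N) := hinj2 i' i (by rw [hye1, ← hxe1])
            have hk : k' = k - 1 := by omega
            rw [hi, hk]
            exact MMove.rotate i k (by omega) (by omega)
      · -- arc / tag
        obtain ⟨hk1, hk2⟩ := hx i k rfl
        constructor
        · intro h
          rw [mmove_iff'] at h
          rcases h with ⟨i0, k0, h1, h2, hxe, hye⟩ | ⟨i0, k0, h1, h2, hxe, hye⟩ |
            ⟨i0, b0, hxe, hye⟩ | ⟨i0, b0, hxe, hye⟩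
          · exact (by cases hye)
          · exact (by cases hye)
          · cases hxe; cases hye
            have h3 : n - 1 - (n - 2) = 1 := by omega
            simpa [rhoAux, h3] using
              DArrow.toZ (N := N) (h := n) (i * u) (xor b' (epsAux N m (i * u)))
          · exact (by cases hxe)
        · intro h
          simp only [rhoAux] at h
          rw [darrow_iff'] at h
          rcases h with ⟨i0, j0, h1, h2, hxe, hye⟩ | ⟨i0, b0, hxe, hye⟩ |
            ⟨i0, b0, hxe, hye⟩ | ⟨i0, j0, h1, h2, hxe, hye⟩
          · injection hye with hye1 hye2
            exact DLab.noConfusion hye2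
          · injection hxe with hxe1 hxe2
            injection hye with hye1 hye2
            injection hxe2 with hxj
            have hi : i' = i := hinj i' i (hye1.trans hxe1.symm)
            have hk : k = n - 2 := by omega
            rw [hi, hk]
            exact MMove.toTag i b'
          · injection hxe with hxe1 hxe2
            exact DLab.noConfusion hxe2
          · injection hye with hye1 hye2
            exact DLab.noConfusion hye2
      · -- tag / arc
        obtain ⟨hk1', hk2'⟩ := hy i' k' rfl
        constructor
        · intro h
          rw [mmove_iff'] at h
          rcases h with ⟨i0, k0, h1, h2, hxe, hye⟩ | ⟨i0, k0, h1, h2, hxe, hye⟩ |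
            ⟨i0, b0, hxe, hye⟩ | ⟨i0, b0, hxe, hye⟩
          · exact (by cases hxe)
          · exact (by cases hxe)
          · exact (by cases hxe)
          · cases hxe; cases hye
            have h3 : n - 1 - (n - 2) = 1 := by omega
            simpa [rhoAux, h3, hadd] using
              DArrow.fromZ (N := N) (h := n) (i * u) (xor b (epsAux N m (i * u)))
        · intro h
          simp only [rhoAux] at h
          rw [darrow_iff'] at h
          rcases h with ⟨i0, j0, h1, h2, hxe, hye⟩ | ⟨i0, b0, hxe, hye⟩ |
            ⟨i0, b0, hxe, hye⟩ | ⟨i0, j0, h1, h2, hxe, hye⟩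
          · injection hxe with hxe1 hxe2
            exact DLab.noConfusion hxe2
          · injection hxe with hxe1 hxe2
            exact DLab.noConfusion hxe2
          · injection hxe with hxe1 hxe2
            injection hye with hye1 hye2
            injection hye2 with hyj
            have hi : i' = i + (m : ZMod N) := hinj2 i' i (by rw [hye1, ← hxe1])
            have hk : k' = n - 2 := by omega
            rw [hi, hk]
            exact MMove.fromTag i b
          · injection hxe with hxe1 hxe2
            exact DLab.noConfusion hxe2
      · -- tag / tag
        constructor
        · intro h
          cases h
        · intro h
          simp only [rhoAux] at h
          rw [darrow_iff'] at h
          rcases h with ⟨i0, j0, h1, h2, hxe, hye⟩ | ⟨i0, b0, hxe, hye⟩ |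
            ⟨i0, b0, hxe, hye⟩ | ⟨i0, j0, h1, h2, hxe, hye⟩
          · injection hxe with hxe1 hxe2
            exact DLab.noConfusion hxe2
          · injection hxe with hxe1 hxe2
            exact DLab.noConfusion hxe2
          · injection hye with hye1 hye2
            exact DLab.noConfusion hye2
          · injection hxe with hxe1 hxe2
            exact DLab.noConfusion hxe2
    · -- translation corresponds
      have hnm := Nat.mul_mod n m 2
      have hNm : N % 2 = ((n - 1) % 2 * (m % 2) % 2 + 1) % 2 := by
        rw [hN', Nat.add_mod, Nat.mul_mod]
      rintro (⟨i, k⟩ | ⟨i, b⟩) hx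
      · simp [TauArc, rhoAux, DTau, hsub]
      · by_cases hm2 : m % 2 = 1
        · rw [hm2, mul_one] at hnm hNm
          have hnm2 : (n * m) % 2 = n % 2 := by omega
          have hneg : (-1 : ZMod N).val = N - 1 := by
            have h1 : ((N - 1 : ℕ) : ZMod N) = (-1 : ZMod N) := by
              rw [Nat.cast_sub (by omega : 1 ≤ N), ZMod.natCast_self, Nat.cast_one, zero_sub]
            rw [← h1, ZMod.val_cast_of_lt (by omega)]
          by_cases hj : i * u = 0
          · by_cases hn2 : n % 2 = 1
            · have hNodd : N % 2 = 1 := by omega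
              have hpar : (N - 1) % 2 = 0 := by omega
              simp [TauArc, rhoAux, DTau, epsAux, hsub, hm2, hj, zero_sub, hneg, hpar,
                hnm2, hn2, ZMod.val_zero]
            · have hn0 : n % 2 = 0 := by omega
              have hNev : N % 2 = 0 := by omega
              have hpar : (N - 1) % 2 = 1 := by omega
              simp [TauArc, rhoAux, DTau, epsAux, hsub, hm2, hj, zero_sub, hneg, hpar,
                hnm2, hn0, ZMod.val_zero]
          · have hv1 : 1 ≤ (i * u).val := by
              rcases Nat.eq_zero_or_pos (i * u).val with h0 | h0
              · exact absurd ((ZMod.val_eq_zero _).1 h0) hj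
              · omega
            have hvlt : (i * u).val < N := ZMod.val_lt _
            have hjm : ((i * u) - 1).val = (i * u).val - 1 := by
              have hcast : (((i * u).val - 1 : ℕ) : ZMod N) = (i * u) - 1 := by
                rw [Nat.cast_sub hv1, ZMod.natCast_rightInverse _, Nat.cast_one]
              rw [← hcast, ZMod.val_cast_of_lt (by omega)]
            by_cases hp : (i * u).val % 2 = 1
            · have hp1 : ((i * u).val - 1) % 2 = 0 := by omega
              simp [TauArc, rhoAux, DTau, epsAux, hsub, hm2, hj, hjm, hp, hp1]
            · have hp0 : (i * u).val % 2 = 0 := by omega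
              have hp1 : ((i * u).val - 1) % 2 = 1 := by omega
              simp [TauArc, rhoAux, DTau, epsAux, hsub, hm2, hj, hjm, hp0, hp1]
        · have hm0 : m % 2 = 0 := by omega
          rw [hm0, mul_zero, Nat.zero_mod] at hnm
          simp [TauArc, rhoAux, DTau, epsAux, hsub, hm0, hnm]
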